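/- arXiv:2408.07950 — 2 statements merged into one kernel-verified Lean document; each statement's English description precedes it below -/
import Mathlib

section
/- Let d be either the ℓ¹ distance d₁ or the logarithmic distance d_l on ℝ², let U, V ⊆ ℝ², c > 0, n ≥ 1, and let S₁,…,Sₙ : ℤ²×ℤ² → M_m(ℂ) be Hermitian kernels with |S_j(x,y)| ≤ C_j e^{−c d(x,y)} for all j and all x,y ∈ ℤ². Suppose there exist p, q ∈ {1,…,n} such that |S_p(x,y)| ≤ C_p e^{−c d(x,y) − c d(x,∂U) − c d(y,∂U)} and |S_q(x,y)| ≤ C_q e^{−c d(x,y) − c d(x,∂V) − c d(y,∂V)} for all x,y. Assume M := Σ_{z∈ℤ²} e^{−(c/4) d(z,0)} < ∞. Then the iterated kernel product S₁·…·Sₙ is given by absolutely convergent sums and satisfies |(S₁·…·Sₙ)(x,y)| ≤ (∏_{j=1}^n C_j) · M^{n−1} · e^{−(c/4)(d(x,y) + d(x,∂U) + d(y,∂U) + d(x,∂V) + d(y,∂V))} for all x, y ∈ ℤ². -/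
noncomputable section

/-- The lattice ℤ². -/
abbrev Z2 := ℤ × ℤ
/-- The plane ℝ². -/
abbrev R2 := ℝ × ℝ

/-- The ℓ¹ distance on the plane. -/
def d1 (x y : R2) : ℝ := |x.1 - y.1| + |x.2 - y.2|

/-- The ℓ¹ distance from a point to a set. -/
def d1S (x : R2) (S : Set R2) : ℝ := sInf (d1 x '' S)

/-- The logarithmic distance on the plane: d_l(x,y) = ln(1 + d₁(x,y)). -/
def dl (x y : R2) : ℝ := Real.log (1 + d1 x y)

/-- The logarithmic distance from a point to a set. -/
def dlS (x : R2) (S : Set R2) : ℝ := Real.log (1 + d1S x S)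

/-- The Euclidean norm on the plane. -/
def eunorm (x : R2) : ℝ := Real.sqrt (x.1 ^ 2 + x.2 ^ 2)

/-- The Euclidean distance on the plane. -/
def eudist (x y : R2) : ℝ := eunorm (x - y)

/-- The embedding of ℤ² into ℝ². -/
def emb (x : Z2) : R2 := ((x.1 : ℝ), (x.2 : ℝ))

/-- Ψ_{U,V}(x) = 1 + d₁(x,∂U) + d₁(x,∂V). -/
def Psi (U V : Set R2) (x : R2) : ℝ := 1 + d1S x (frontier U) + d1S x (frontier V)

/-- U and V are transverse: for some c ∈ (0,1), Ψ_{U,V}(x) ≥ |x|ᶜ whenever |x| ≥ 1/c. -/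
def Transverse (U V : Set R2) : Prop :=
  ∃ c : ℝ, 0 < c ∧ c < 1 ∧ ∀ x : R2, 1 / c ≤ eunorm x → eunorm x ^ c ≤ Psi U V x

/-- The operator norm of an m×m complex matrix. -/
def matNorm {m : ℕ} (M : Matrix (Fin m) (Fin m) ℂ) : ℝ :=
  ‖Matrix.toEuclideanCLM (𝕜 := ℂ) M‖

/-- The real-valued indicator function of a subset of the plane. -/
def indR (W : Set R2) (z : R2) : ℝ := Set.indicator W (fun _ => (1:ℝ)) z

/-- Product of two kernels: (A·B)(x,y) = Σ_z A(x,z)B(z,y). -/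
def kprod {m : ℕ} (A B : Z2 → Z2 → Matrix (Fin m) (Fin m) ℂ) :
    Z2 → Z2 → Matrix (Fin m) (Fin m) ℂ :=
  fun x y => ∑' z : Z2, A x z * B z y

/-- Left-associated iterated kernel products: PP S k = ((S 0 · S 1) · ⋯) · S k. -/
def PP {m : ℕ} (S : ℕ → Z2 → Z2 → Matrix (Fin m) (Fin m) ℂ) :
    ℕ → Z2 → Z2 → Matrix (Fin m) (Fin m) ℂ
  | 0 => S 0
  | k + 1 => kprod (PP S k) (S (k + 1))


section MetricFacts

lemma d1_nonneg' (x y : R2) : 0 ≤ d1 x y := add_nonneg (abs_nonneg _) (abs_nonneg _)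

lemma d1_comm' (x y : R2) : d1 x y = d1 y x := by
  unfold d1; rw [abs_sub_comm, abs_sub_comm x.2]

lemma d1_tri' (x y z : R2) : d1 x z ≤ d1 x y + d1 y z := by
  unfold d1
  have h1 := abs_sub_le x.1 y.1 z.1
  have h2 := abs_sub_le x.2 y.2 z.2
  linarith

lemma d1S_nonneg' (x : R2) (W : Set R2) : 0 ≤ d1S x W := by
  apply Real.sInf_nonneg
  rintro t ⟨s, -, rfl⟩
  exact d1_nonneg' _ _

lemma d1S_lip' (x y : R2) (W : Set R2) : d1S x W ≤ d1 x y + d1S y W := by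
  rcases W.eq_empty_or_nonempty with rfl | ⟨w, hw⟩
  · simp [d1S, Real.sInf_empty]
    exact d1_nonneg' x y
  · have hbx : BddBelow (d1 x '' W) := ⟨0, by rintro t ⟨s, -, rfl⟩; exact d1_nonneg' _ _⟩
    have hne : (d1 y '' W).Nonempty := ⟨d1 y w, ⟨w, hw, rfl⟩⟩
    rw [d1S, d1S, ← sub_le_iff_le_add']
    apply le_csInf hne
    rintro t ⟨s, hs, rfl⟩
    rw [sub_le_iff_le_add']
    calc sInf (d1 x '' W) ≤ d1 x s := csInf_le hbx ⟨s, hs, rfl⟩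
      _ ≤ d1 x y + d1 y s := d1_tri' _ _ _

lemma dl_nonneg' (x y : R2) : 0 ≤ dl x y := Real.log_nonneg (by linarith [d1_nonneg' x y])

lemma dl_comm' (x y : R2) : dl x y = dl y x := by rw [dl, dl, d1_comm']

lemma dl_tri' (x y z : R2) : dl x z ≤ dl x y + dl y z := by
  have h1 := d1_nonneg' x y; have h2 := d1_nonneg' y z
  have htri := d1_tri' x y z
  unfold dl
  rw [← Real.log_mul (by linarith) (by linarith)]
  apply Real.log_le_log (by linarith [d1_nonneg' x z])
  nlinarith

lemma dlS_nonneg' (x : R2) (W : Set R2) : 0 ≤ dlS x W :=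
  Real.log_nonneg (by linarith [d1S_nonneg' x W])

lemma dlS_lip' (x y : R2) (W : Set R2) : dlS x W ≤ dl x y + dlS y W := by
  have h1 := d1_nonneg' x y; have h2 := d1S_nonneg' y W
  have hlip := d1S_lip' x y W
  unfold dlS dl
  rw [← Real.log_mul (by linarith) (by linarith)]
  apply Real.log_le_log (by linarith [d1S_nonneg' x W])
  nlinarith

lemma d1_trans' (z w : Z2) : d1 (emb z) (emb w) = d1 (emb (z - w)) (0, 0) := by
  unfold d1 emb; push_cast; simp [Prod.fst_sub, Prod.snd_sub]

lemma dl_trans' (z w : Z2) : dl (emb z) (emb w) = dl (emb (z - w)) (0, 0) := by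
  unfold dl; rw [d1_trans']

end MetricFacts

open scoped Matrix.Norms.L2Operator

lemma matNorm_eq' {m : ℕ} (A : Matrix (Fin m) (Fin m) ℂ) : matNorm A = ‖A‖ := rfl
lemma matNorm_nonneg' {m : ℕ} (A : Matrix (Fin m) (Fin m) ℂ) : 0 ≤ matNorm A := norm_nonneg _
lemma matNorm_mul_le' {m : ℕ} (A B : Matrix (Fin m) (Fin m) ℂ) :
    matNorm (A * B) ≤ matNorm A * matNorm B := norm_mul_le A B
lemma kprod_norm' {m : ℕ} (A B : Z2 → Z2 → Matrix (Fin m) (Fin m) ℂ) (x y : Z2)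
    (h : Summable fun z => matNorm (A x z * B z y)) :
    matNorm (kprod A B x y) ≤ ∑' z, matNorm (A x z * B z y) := by
  simp only [matNorm_eq'] at *
  exact norm_tsum_le_tsum_norm h

/-- The abstract inductive bound. -/
lemma aux_bound {m : ℕ} (n : ℕ) (c : ℝ) (hc : 0 < c)
    (e : Z2 → Z2 → ℝ) (u v : Z2 → ℝ) (M : ℝ) (hM0 : 0 ≤ M)
    (he0 : ∀ x y, 0 ≤ e x y) (hesymm : ∀ x y, e x y = e y x)
    (hetri : ∀ x y z, e x z ≤ e x y + e y z)
    (hu0 : ∀ x, 0 ≤ u x) (hv0 : ∀ x, 0 ≤ v x)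
    (hulip : ∀ x y, u x ≤ e x y + u y) (hvlip : ∀ x y, v x ≤ e x y + v y)
    (hsum : ∀ y : Z2, Summable fun z => Real.exp (-(c/4) * e z y))
    (htsum : ∀ y : Z2, (∑' z : Z2, Real.exp (-(c/4) * e z y)) = M)
    (p q : ℕ) (hp : p < n) (hq : q < n)
    (S : ℕ → Z2 → Z2 → Matrix (Fin m) (Fin m) ℂ) (Cf : ℕ → ℝ)
    (hCf : ∀ j < n, 0 ≤ Cf j)
    (hS : ∀ j < n, ∀ x y : Z2, matNorm (S j x y) ≤ Cf j * Real.exp (-(c/4) * (2 * e x y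
        + (if j = p then u x + u y else e x y) + (if j = q then v x + v y else e x y)))) :
    ∀ k < n, ∀ x y : Z2,
      matNorm (PP S k x y) ≤ ((∏ j ∈ Finset.range (k+1), Cf j) * M ^ k) *
        Real.exp (-(c/4) * (e x y + (if p ≤ k then u x + u y else e x y)
          + (if q ≤ k then v x + v y else e x y))) := by
  -- abbreviations
  set W : ℕ → Z2 → Z2 → ℝ := fun k x y => e x y + (if p ≤ k then u x + u y else e x y)
      + (if q ≤ k then v x + v y else e x y) with hW
  set G : ℕ → Z2 → Z2 → ℝ := fun j x y => 2 * e x y + (if j = p then u x + u y else e x y)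
      + (if j = q then v x + v y else e x y) with hG
  set A : ℕ → ℝ := fun k => (∏ j ∈ Finset.range (k+1), Cf j) * M ^ k with hA
  have hA0 : ∀ k < n, 0 ≤ A k := by
    intro k hk
    apply mul_nonneg _ (pow_nonneg hM0 _)
    apply Finset.prod_nonneg
    intro j hj
    exact hCf j (by simp at hj; omega)
  have hc4 : (0:ℝ) < c/4 := by linarith
  have hifP : ∀ (p : ℕ) (u : Z2 → ℝ), (∀ x, 0 ≤ u x) → (∀ x y, u x ≤ e x y + u y) →
      ∀ (k : ℕ) (x z y : Z2), (if p ≤ k+1 then u x + u y else e x y) ≤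
        (if p ≤ k then u x + u z else e x z) + (if k+1 = p then u z + u y else e z y) := by
    intro p u hu0 hulip k x z y
    by_cases hpk : p ≤ k
    · rw [if_pos hpk, if_pos (by omega), if_neg (by omega)]
      have h1 := hulip y z
      have h2 := hesymm y z
      linarith
    · by_cases hpk1 : p = k + 1
      · rw [if_neg hpk, if_pos (by omega), if_pos (by omega)]
        linarith [hulip x z]
      · rw [if_neg hpk, if_neg (by omega), if_neg (by omega)]
        exact hetri x z y
  have hkey : ∀ (k : ℕ) (x z y : Z2), W (k+1) x y + e z y ≤ W k x z + G (k+1) z y := by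
    intro k x z y
    have h1 := hifP p u hu0 hulip k x z y
    have h2 := hifP q v hv0 hvlip k x z y
    have h3 := hetri x z y
    simp only [hW, hG]
    linarith
  have hW0 : ∀ k x y, 0 ≤ W k x y := by
    intro k x y
    simp only [hW]
    split <;> split <;> [skip; skip; skip; skip] <;>
      first
        | linarith [he0 x y, hu0 x, hu0 y, hv0 x, hv0 y]
  have hG0e : ∀ j (z y : Z2), e z y ≤ G j z y := by
    intro j z y
    simp only [hG]
    split <;> split <;>
      first
        | linarith [he0 z y, hu0 z, hu0 y, hv0 z, hv0 y]
  intro k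
  induction k with
  | zero =>
    intro hk x y
    have h := hS 0 hk x y
    have hGW : W 0 x y ≤ G 0 x y := by
      simp only [hW, hG, Nat.le_zero, eq_comm (a := (0:ℕ))]
      split <;> split <;> linarith [he0 x y]
    calc matNorm (PP S 0 x y) = matNorm (S 0 x y) := rfl
      _ ≤ Cf 0 * Real.exp (-(c/4) * G 0 x y) := h
      _ ≤ Cf 0 * Real.exp (-(c/4) * W 0 x y) := by
          apply mul_le_mul_of_nonneg_left _ (hCf 0 hk)
          apply Real.exp_le_exp.2
          nlinarith [mul_le_mul_of_nonneg_left hGW (le_of_lt hc4)]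
      _ = A 0 * Real.exp (-(c/4) * W 0 x y) := by
          simp [hA, Finset.prod_range_one]
  | succ k ih =>
    intro hk x y
    have hkn : k < n := by omega
    have ihb := ih hkn
    have hAk := hA0 k hkn
    have hCk1 := hCf (k+1) hk
    have hz : ∀ z, matNorm (PP S k x z * S (k+1) z y) ≤
        (A k * Cf (k+1)) * Real.exp (-(c/4) * (W k x z + G (k+1) z y)) := by
      intro z
      calc matNorm (PP S k x z * S (k+1) z y)
          ≤ matNorm (PP S k x z) * matNorm (S (k+1) z y) := matNorm_mul_le' _ _
        _ ≤ (A k * Real.exp (-(c/4) * W k x z)) * (Cf (k+1) * Real.exp (-(c/4) * G (k+1) z y)) := by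
            apply mul_le_mul (ihb x z) (hS (k+1) hk z y) (matNorm_nonneg' _)
            positivity
        _ = (A k * Cf (k+1)) * Real.exp (-(c/4) * (W k x z + G (k+1) z y)) := by
            rw [mul_mul_mul_comm, ← Real.exp_add]
            congr 1
            ring
    have hz2 : ∀ z, (A k * Cf (k+1)) * Real.exp (-(c/4) * (W k x z + G (k+1) z y)) ≤
        ((A k * Cf (k+1)) * Real.exp (-(c/4) * W (k+1) x y)) * Real.exp (-(c/4) * e z y) := by
      intro z
      have hexp : Real.exp (-(c/4) * (W k x z + G (k+1) z y)) ≤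
          Real.exp (-(c/4) * W (k+1) x y) * Real.exp (-(c/4) * e z y) := by
        rw [← Real.exp_add]
        apply Real.exp_le_exp.2
        nlinarith [mul_le_mul_of_nonneg_left (hkey k x z y) (le_of_lt hc4)]
      calc (A k * Cf (k+1)) * Real.exp (-(c/4) * (W k x z + G (k+1) z y))
          ≤ (A k * Cf (k+1)) * (Real.exp (-(c/4) * W (k+1) x y) * Real.exp (-(c/4) * e z y)) :=
            mul_le_mul_of_nonneg_left hexp (mul_nonneg hAk hCk1)
        _ = ((A k * Cf (k+1)) * Real.exp (-(c/4) * W (k+1) x y)) * Real.exp (-(c/4) * e z y) := by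
            ring
    have hsummaj : Summable fun z =>
        ((A k * Cf (k+1)) * Real.exp (-(c/4) * W (k+1) x y)) * Real.exp (-(c/4) * e z y) :=
      (hsum y).mul_left _
    have hsummid : Summable fun z =>
        (A k * Cf (k+1)) * Real.exp (-(c/4) * (W k x z + G (k+1) z y)) :=
      hsummaj.of_nonneg_of_le (fun z => by positivity) hz2
    have hsumnorm : Summable fun z => matNorm (PP S k x z * S (k+1) z y) :=
      hsummid.of_nonneg_of_le (fun z => matNorm_nonneg' _) hz
    calc matNorm (PP S (k+1) x y)
        = matNorm (kprod (PP S k) (S (k+1)) x y) := rfl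
      _ ≤ ∑' z, matNorm (PP S k x z * S (k+1) z y) := kprod_norm' _ _ _ _ hsumnorm
      _ ≤ ∑' z, (A k * Cf (k+1)) * Real.exp (-(c/4) * (W k x z + G (k+1) z y)) :=
          Summable.tsum_le_tsum hz hsumnorm hsummid
      _ ≤ ∑' z, ((A k * Cf (k+1)) * Real.exp (-(c/4) * W (k+1) x y)) * Real.exp (-(c/4) * e z y) :=
          Summable.tsum_le_tsum hz2 hsummid hsummaj
      _ = ((A k * Cf (k+1)) * Real.exp (-(c/4) * W (k+1) x y)) *
            ∑' z, Real.exp (-(c/4) * e z y) := tsum_mul_left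
      _ = A (k+1) * Real.exp (-(c/4) * W (k+1) x y) := by
          rw [htsum y]
          simp only [hA, Finset.prod_range_succ, pow_succ]
          ring


set_option maxHeartbeats 1000000 in
/-- Lemma 2.4: bound for iterated products of short-range kernels,
two of which decay away from ∂U resp. ∂V; the kernels are indexed by 0,…,n−1. -/
theorem kernel_product_bound
    (m : ℕ) (hm : 0 < m) (n : ℕ) (hn : 1 ≤ n)
    (d : R2 → R2 → ℝ) (dS : R2 → Set R2 → ℝ)
    (hd : (d = d1 ∧ dS = d1S) ∨ (d = dl ∧ dS = dlS))
    (U V : Set R2) (c : ℝ) (hc : 0 < c)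
    (S : ℕ → Z2 → Z2 → Matrix (Fin m) (Fin m) ℂ) (Cf : ℕ → ℝ)
    (hHerm : ∀ j < n, ∀ x y : Z2, S j x y = Matrix.conjTranspose (S j y x))
    (hS : ∀ j < n, ∀ x y : Z2, matNorm (S j x y) ≤ Cf j * Real.exp (-c * d (emb x) (emb y)))
    (p : ℕ) (hp : p < n)
    (hSp : ∀ x y : Z2, matNorm (S p x y) ≤ Cf p * Real.exp (-c * d (emb x) (emb y)
      - c * dS (emb x) (frontier U) - c * dS (emb y) (frontier U)))
    (q : ℕ) (hq : q < n)
    (hSq : ∀ x y : Z2, matNorm (S q x y) ≤ Cf q * Real.exp (-c * d (emb x) (emb y)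
      - c * dS (emb x) (frontier V) - c * dS (emb y) (frontier V)))
    (hM : Summable fun z : Z2 => Real.exp (-(c / 4) * d (emb z) (0, 0))) :
    (∀ k : ℕ, k + 1 < n → ∀ x y : Z2,
      Summable fun z : Z2 => matNorm (PP S k x z * S (k + 1) z y)) ∧
    (∀ x y : Z2, matNorm (PP S (n - 1) x y) ≤
      (∏ j ∈ Finset.range n, Cf j) *
        (∑' z : Z2, Real.exp (-(c / 4) * d (emb z) (0, 0))) ^ (n - 1) *
        Real.exp (-(c / 4) * (d (emb x) (emb y)
          + dS (emb x) (frontier U) + dS (emb y) (frontier U)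
          + dS (emb x) (frontier V) + dS (emb y) (frontier V)))) := by
  classical
  obtain ⟨hd0, hdsymm, hdtri, hdS0, hdSlip, hdtrans⟩ :
      (∀ x y : R2, 0 ≤ d x y) ∧ (∀ x y : R2, d x y = d y x) ∧
      (∀ x y z : R2, d x z ≤ d x y + d y z) ∧
      (∀ (x : R2) (W : Set R2), 0 ≤ dS x W) ∧
      (∀ (x y : R2) (W : Set R2), dS x W ≤ d x y + dS y W) ∧
      (∀ z w : Z2, d (emb z) (emb w) = d (emb (z - w)) (0, 0)) := by
    rcases hd with ⟨rfl, rfl⟩ | ⟨rfl, rfl⟩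
    · exact ⟨d1_nonneg', d1_comm', d1_tri', d1S_nonneg', d1S_lip', d1_trans'⟩
    · exact ⟨dl_nonneg', dl_comm', dl_tri', dlS_nonneg', dlS_lip', dl_trans'⟩
  set M : ℝ := ∑' z : Z2, Real.exp (-(c / 4) * d (emb z) (0, 0)) with hMdef
  have hM0 : 0 ≤ M := tsum_nonneg fun z => (Real.exp_pos _).le
  have hcomp : ∀ y : Z2, (fun z : Z2 => Real.exp (-(c / 4) * d (emb z) (emb y))) =
      fun z : Z2 => Real.exp (-(c / 4) * d (emb ((Equiv.subRight y) z)) (0, 0)) := by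
    intro y; funext z
    simp only [Equiv.subRight_apply]
    rw [hdtrans z y]
  have hsum : ∀ y : Z2, Summable fun z : Z2 =>
      Real.exp (-(c / 4) * d (emb z) (emb y)) := by
    intro y
    rw [hcomp y]
    exact ((Equiv.subRight y).summable_iff).2 hM
  have htsum : ∀ y : Z2, (∑' z : Z2, Real.exp (-(c / 4) * d (emb z) (emb y))) = M := by
    intro y
    rw [hcomp y, hMdef]
    exact (Equiv.subRight y).tsum_eq (fun z : Z2 => Real.exp (-(c / 4) * d (emb z) (0, 0)))
  have hCf : ∀ j < n, 0 ≤ Cf j := by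
    intro j hj
    have h := (matNorm_nonneg' (S j (0, 0) (0, 0))).trans (hS j hj (0, 0) (0, 0))
    by_contra hneg
    push_neg at hneg
    nlinarith [Real.exp_pos (-c * d (emb (0, 0)) (emb (0, 0)))]
  -- the combined single-kernel bound
  have hS' : ∀ j < n, ∀ x y : Z2, matNorm (S j x y) ≤ Cf j *
      Real.exp (-(c / 4) * (2 * d (emb x) (emb y)
        + (if j = p then dS (emb x) (frontier U) + dS (emb y) (frontier U)
            else d (emb x) (emb y))
        + (if j = q then dS (emb x) (frontier V) + dS (emb y) (frontier V)
            else d (emb x) (emb y)))) := by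
    intro j hj x y
    have hCj := hCf j hj
    have hE : 0 ≤ d (emb x) (emb y) := hd0 _ _
    have hux : 0 ≤ dS (emb x) (frontier U) := hdS0 _ _
    have huy : 0 ≤ dS (emb y) (frontier U) := hdS0 _ _
    have hvx : 0 ≤ dS (emb x) (frontier V) := hdS0 _ _
    have hvy : 0 ≤ dS (emb y) (frontier V) := hdS0 _ _
    have hcE := mul_nonneg hc.le hE
    have hcux := mul_nonneg hc.le hux
    have hcuy := mul_nonneg hc.le huy
    have hcvx := mul_nonneg hc.le hvx
    have hcvy := mul_nonneg hc.le hvy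
    by_cases hjp : j = p <;> by_cases hjq : j = q
    · -- j = p = q : geometric-mean trick
      rw [if_pos hjp, if_pos hjq, hjp]
      rw [hjp] at hCj
      have h1 := hSp x y
      have h2 := hSq x y
      rw [(by omega : q = p)] at h2
      have t0 := matNorm_nonneg' (S p x y)
      set A1 : ℝ := -c * d (emb x) (emb y) - c * dS (emb x) (frontier U)
        - c * dS (emb y) (frontier U) with hA1
      set A2 : ℝ := -c * d (emb x) (emb y) - c * dS (emb x) (frontier V)
        - c * dS (emb y) (frontier V) with hA2
      set Av : ℝ := (A1 + A2) / 2 with hAv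
      have havg : Real.exp A1 * Real.exp A2 = Real.exp Av * Real.exp Av := by
        rw [← Real.exp_add, ← Real.exp_add, hAv]; congr 1; ring
      have hts : matNorm (S p x y) * matNorm (S p x y) ≤
          (Cf p * Real.exp Av) * (Cf p * Real.exp Av) := by
        calc matNorm (S p x y) * matNorm (S p x y)
            ≤ (Cf p * Real.exp A1) * (Cf p * Real.exp A2) :=
              mul_le_mul h1 h2 t0 (by positivity)
          _ = (Cf p * Real.exp Av) * (Cf p * Real.exp Av) := by
              rw [mul_mul_mul_comm, havg, mul_mul_mul_comm]
      have hle : matNorm (S p x y) ≤ Cf p * Real.exp Av := by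
        nlinarith [t0, mul_nonneg hCj (Real.exp_pos Av).le]
      refine hle.trans (mul_le_mul_of_nonneg_left (Real.exp_le_exp.2 ?_) hCj)
      rw [hAv, hA1, hA2]
      nlinarith
    · rw [if_pos hjp, if_neg hjq, hjp]
      rw [hjp] at hCj
      refine (hSp x y).trans (mul_le_mul_of_nonneg_left (Real.exp_le_exp.2 ?_) hCj)
      nlinarith
    · rw [if_neg hjp, if_pos hjq, hjq]
      rw [hjq] at hCj
      refine (hSq x y).trans (mul_le_mul_of_nonneg_left (Real.exp_le_exp.2 ?_) hCj)
      nlinarith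
    · rw [if_neg hjp, if_neg hjq]
      have harg : -(c / 4) * (2 * d (emb x) (emb y) + d (emb x) (emb y)
          + d (emb x) (emb y)) = -c * d (emb x) (emb y) := by ring
      rw [harg]
      exact hS j hj x y
  have main := aux_bound n c hc (fun x y : Z2 => d (emb x) (emb y))
    (fun x : Z2 => dS (emb x) (frontier U)) (fun x : Z2 => dS (emb x) (frontier V))
    M hM0 (fun x y => hd0 _ _) (fun x y => hdsymm _ _) (fun x y z => hdtri _ _ _)
    (fun x => hdS0 _ _) (fun x => hdS0 _ _)
    (fun x y => hdSlip _ _ _) (fun x y => hdSlip _ _ _)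
    hsum htsum p q hp hq S Cf hCf hS'
  constructor
  · -- summability of the products
    intro k hk x y
    have hb := main k (by omega)
    have hAk : 0 ≤ (∏ j ∈ Finset.range (k + 1), Cf j) * M ^ k :=
      mul_nonneg (Finset.prod_nonneg fun j hj => hCf j (by simp at hj; omega))
        (pow_nonneg hM0 _)
    have hCk := hCf (k + 1) hk
    refine Summable.of_nonneg_of_le (fun z => matNorm_nonneg' _) (fun z => ?_)
      ((hsum y).mul_left (((∏ j ∈ Finset.range (k + 1), Cf j) * M ^ k) * Cf (k + 1)))
    have hW0 : 0 ≤ d (emb x) (emb z)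
        + (if p ≤ k then dS (emb x) (frontier U) + dS (emb z) (frontier U)
            else d (emb x) (emb z))
        + (if q ≤ k then dS (emb x) (frontier V) + dS (emb z) (frontier V)
            else d (emb x) (emb z)) := by
      split_ifs <;>
        linarith [hd0 (emb x) (emb z), hdS0 (emb x) (frontier U), hdS0 (emb z) (frontier U),
          hdS0 (emb x) (frontier V), hdS0 (emb z) (frontier V)]
    have hGe : d (emb z) (emb y) ≤ 2 * d (emb z) (emb y)
        + (if k + 1 = p then dS (emb z) (frontier U) + dS (emb y) (frontier U)
            else d (emb z) (emb y))
        + (if k + 1 = q then dS (emb z) (frontier V) + dS (emb y) (frontier V)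
            else d (emb z) (emb y)) := by
      split_ifs <;>
        linarith [hd0 (emb z) (emb y), hdS0 (emb z) (frontier U), hdS0 (emb y) (frontier U),
          hdS0 (emb z) (frontier V), hdS0 (emb y) (frontier V)]
    have hc4 : (0:ℝ) < c / 4 := by linarith
    have h1 : Real.exp (-(c / 4) * (d (emb x) (emb z)
        + (if p ≤ k then dS (emb x) (frontier U) + dS (emb z) (frontier U)
            else d (emb x) (emb z))
        + (if q ≤ k then dS (emb x) (frontier V) + dS (emb z) (frontier V)
            else d (emb x) (emb z)))) ≤ 1 := by
      rw [← Real.exp_zero]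
      apply Real.exp_le_exp.2
      nlinarith
    have h2 : Real.exp (-(c / 4) * (2 * d (emb z) (emb y)
        + (if k + 1 = p then dS (emb z) (frontier U) + dS (emb y) (frontier U)
            else d (emb z) (emb y))
        + (if k + 1 = q then dS (emb z) (frontier V) + dS (emb y) (frontier V)
            else d (emb z) (emb y)))) ≤ Real.exp (-(c / 4) * d (emb z) (emb y)) := by
      apply Real.exp_le_exp.2
      nlinarith
    calc matNorm (PP S k x z * S (k + 1) z y)
        ≤ matNorm (PP S k x z) * matNorm (S (k + 1) z y) := matNorm_mul_le' _ _
      _ ≤ (((∏ j ∈ Finset.range (k + 1), Cf j) * M ^ k) * Real.exp (-(c / 4) *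
            (d (emb x) (emb z)
              + (if p ≤ k then dS (emb x) (frontier U) + dS (emb z) (frontier U)
                  else d (emb x) (emb z))
              + (if q ≤ k then dS (emb x) (frontier V) + dS (emb z) (frontier V)
                  else d (emb x) (emb z))))) *
          (Cf (k + 1) * Real.exp (-(c / 4) * (2 * d (emb z) (emb y)
              + (if k + 1 = p then dS (emb z) (frontier U) + dS (emb y) (frontier U)
                  else d (emb z) (emb y))
              + (if k + 1 = q then dS (emb z) (frontier V) + dS (emb y) (frontier V)
                  else d (emb z) (emb y))))) :=
          mul_le_mul (hb x z) (hS' (k + 1) hk z y) (matNorm_nonneg' _) (by positivity)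
      _ ≤ (((∏ j ∈ Finset.range (k + 1), Cf j) * M ^ k) * 1) *
            (Cf (k + 1) * Real.exp (-(c / 4) * d (emb z) (emb y))) := by
          apply mul_le_mul (mul_le_mul_of_nonneg_left h1 hAk)
            (mul_le_mul_of_nonneg_left h2 hCk) (by positivity) (by positivity)
      _ = (((∏ j ∈ Finset.range (k + 1), Cf j) * M ^ k) * Cf (k + 1)) *
            Real.exp (-(c / 4) * d (emb z) (emb y)) := by ring
  · -- the final bound
    intro x y
    have hb := main (n - 1) (by omega) x y
    rw [if_pos (by omega : p ≤ n - 1), if_pos (by omega : q ≤ n - 1)] at hb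
    rw [(by omega : n - 1 + 1 = n)] at hb
    have harg : -(c / 4) * (d (emb x) (emb y)
        + (dS (emb x) (frontier U) + dS (emb y) (frontier U))
        + (dS (emb x) (frontier V) + dS (emb y) (frontier V))) =
        -(c / 4) * (d (emb x) (emb y)
        + dS (emb x) (frontier U) + dS (emb y) (frontier U)
        + dS (emb x) (frontier V) + dS (emb y) (frontier V)) := by ring
    rw [harg] at hb
    exact hb

end
end

section
/- Let {(U_n,V_n) : n ∈ ℕ} be a family of pairs of transverse subsets of ℝ² such that for every n, U_n ∩ 𝔻_n(0) = ℍ₂ ∩ 𝔻_n(0) and V_n ∩ 𝔻_n(0) = ℍ₁ ∩ 𝔻_n(0), where 𝔻_n(0) = {x ∈ ℝ² : d₁(x,0) < n}. Let P be a self-adjoint projection on ℓ²(ℤ²,ℂᵐ) whose kernel is PSR. Then for every x ∈ ℤ², the matrices K_{U_n,V_n}(P)(x,x) converge, as n → ∞, to K_{ℍ₂,ℍ₁}(P)(x,x). -/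
noncomputable section

/-- The Hilbert space ℓ²(ℤ²,ℂᵐ). -/
abbrev Hsp (m : ℕ) := lp (fun _ : Z2 => EuclideanSpace ℂ (Fin m)) 2

/-- The kernel of a bounded operator on ℓ²(ℤ²,ℂᵐ): the m×m matrix with entries
⟨δ_x eᵢ, A δ_y eⱼ⟩. -/
def opKer {m : ℕ} (A : Hsp m →L[ℂ] Hsp m) (x y : Z2) : Matrix (Fin m) (Fin m) ℂ :=
  Matrix.of fun i j =>
    (inner ℂ (lp.single 2 x (EuclideanSpace.single i (1:ℂ)))
      (A (lp.single 2 y (EuclideanSpace.single j (1:ℂ)))) : ℂ)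

/-- A is exponentially-short-range (ESR) with constant ν. -/
def IsESR {m : ℕ} (ν : ℝ) (A : Hsp m →L[ℂ] Hsp m) : Prop :=
  ∀ x y : Z2, matNorm (opKer A x y) ≤ ν⁻¹ * Real.exp (-2 * ν * d1 (emb x) (emb y))

/-- A is polynomially-short-range (PSR). -/
def IsPSR {m : ℕ} (A : Hsp m →L[ℂ] Hsp m) : Prop :=
  ∀ N : ℝ, 0 < N → ∃ C : ℝ, 0 < C ∧ ∀ x y : Z2,
    matNorm (opKer A x y) ≤ C * (1 + d1 (emb x) (emb y)) ^ (-N)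

lemma indic_memℓp {m : ℕ} (W : Set R2) (ψ : Hsp m) :
    Memℓp ((emb ⁻¹' W).indicator (fun x : Z2 => ψ x)) 2 := by
  apply memℓp_gen
  refine Summable.of_nonneg_of_le (fun x => Real.rpow_nonneg (norm_nonneg _) _)
    (fun x => ?_) ((lp.memℓp ψ).summable (by norm_num))
  exact Real.rpow_le_rpow (norm_nonneg _) (norm_indicator_le_norm_self _ _) (by norm_num)

/-- The multiplication operator by the indicator function of W ⊆ ℝ², acting on ℓ²(ℤ²,ℂᵐ). -/
def indicOp (m : ℕ) (W : Set R2) : Hsp m →L[ℂ] Hsp m :=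
  LinearMap.mkContinuous
    { toFun := fun ψ => (⟨(emb ⁻¹' W).indicator (fun x : Z2 => ψ x), indic_memℓp W ψ⟩ : Hsp m)
      map_add' := by
        intro ψ φ
        apply lp.ext
        funext x
        by_cases h : x ∈ emb ⁻¹' W <;>
          simp [Set.indicator_of_mem, Set.indicator_of_notMem, h, lp.coeFn_add] <;> erw [Pi.add_apply] <;> simp [h]
      map_smul' := by
        intro c ψ
        apply lp.ext
        funext x
        by_cases h : x ∈ emb ⁻¹' W <;>
          simp [Set.indicator_of_mem, Set.indicator_of_notMem, h, lp.coeFn_smul] }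
    1
    (by
      intro ψ
      rw [one_mul]
      refine lp.norm_le_of_tsum_le (by norm_num) (norm_nonneg ψ) ?_
      rw [lp.norm_rpow_eq_tsum (by norm_num) ψ]
      refine Summable.tsum_le_tsum (fun x => ?_) ((lp.memℓp _).summable (by norm_num))
        ((lp.memℓp ψ).summable (by norm_num))
      exact Real.rpow_le_rpow (norm_nonneg _) (norm_indicator_le_norm_self _ _) (by norm_num))

/-- The commutator of two operators. -/
def commOp {m : ℕ} (A B : Hsp m →L[ℂ] Hsp m) : Hsp m →L[ℂ] Hsp m := A * B - B * A

/-- K_{U,V}(P) = P[[P,1_U],[P,1_V]]. -/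
def Kop {m : ℕ} (P : Hsp m →L[ℂ] Hsp m) (U V : Set R2) : Hsp m →L[ℂ] Hsp m :=
  P * commOp (commOp P (indicOp m U)) (commOp P (indicOp m V))

/-- Absolute convergence of the sum defining the geometric bulk conductance σ_b^{U,V}(P). -/
def bulkSummable {m : ℕ} (P : Hsp m →L[ℂ] Hsp m) (U V : Set R2) : Prop :=
  Summable fun x : Z2 => ‖(opKer (Kop P U V) x x).trace‖

/-- The geometric bulk conductance σ_b^{U,V}(P) = −i Σ_x tr K_{U,V}(P)(x,x). -/
def sigmaB {m : ℕ} (P : Hsp m →L[ℂ] Hsp m) (U V : Set R2) : ℂ :=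
  (-Complex.I) * ∑' x : Z2, (opKer (Kop P U V) x x).trace

/-- The right half-plane ℍ₁. -/
def H1 : Set R2 := {x | 0 < x.1}
/-- The upper half-plane ℍ₂. -/
def H2 : Set R2 := {x | 0 < x.2}

/-- Absolute convergence of the sum defining the Hall conductance. -/
def hallSummable {m : ℕ} (P : Hsp m →L[ℂ] Hsp m) : Prop := bulkSummable P H2 H1

/-- The Hall conductance σ_b(P) = σ_b^{ℍ₂,ℍ₁}(P). -/
def sigmaHall {m : ℕ} (P : Hsp m →L[ℂ] Hsp m) : ℂ := sigmaB P H2 H1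

/-- H_e is an edge operator associated to H₊, H₋ in U, U^c, with constant ν. -/
def IsEdgeOp {m : ℕ} (ν : ℝ) (Hp Hm He : Hsp m →L[ℂ] Hsp m) (U : Set R2) : Prop :=
  IsSelfAdjoint He ∧
  ∀ x y : Z2,
    matNorm (opKer (He - indicOp m U * Hp * indicOp m U
      - indicOp m Uᶜ * Hm * indicOp m Uᶜ) x y)
    ≤ ν⁻¹ * Real.exp (-2 * ν * d1S (emb x) (frontier U))

/-- ρ ∈ C^∞(ℝ;[0,1]) with ρ = 0 on (−∞,a] and ρ = 1 on [b,∞). -/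
def IsSwitch (a b : ℝ) (ρ : ℝ → ℝ) : Prop :=
  ContDiff ℝ (⊤ : ℕ∞) ρ ∧ (∀ x, ρ x ∈ Set.Icc (0:ℝ) 1) ∧
  (∀ x ≤ a, ρ x = 0) ∧ (∀ x ≥ b, ρ x = 1)

/-- f : ℝ → ℝ continuous, equal to 1 on (−∞,a] and to 0 on [b,∞); f(H) is then the
spectral projection of H below the gap (a,b). -/
def IsBelowCut (a b : ℝ) (f : ℝ → ℝ) : Prop :=
  Continuous f ∧ (∀ x ≤ a, f x = 1) ∧ (∀ x ≥ b, f x = 0)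

/-- Absolute convergence of the sum defining the edge conductance. -/
def edgeSummable {m : ℕ} (He : Hsp m →L[ℂ] Hsp m) (ρ : ℝ → ℝ) (V : Set R2) : Prop :=
  Summable fun x : Z2 =>
    ‖(opKer (cfc (instCFC := IsSelfAdjoint.instContinuousFunctionalCalculus) (deriv ρ) He * commOp He (indicOp m V)) x x).trace‖

/-- The edge conductance σ_e^{U,V}(H_e) = i Σ_x tr (ρ'(H_e)[H_e,1_V])(x,x). -/
def sigmaE {m : ℕ} (He : Hsp m →L[ℂ] Hsp m) (ρ : ℝ → ℝ) (V : Set R2) : ℂ :=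
  Complex.I * ∑' x : Z2, (opKer (cfc (instCFC := IsSelfAdjoint.instContinuousFunctionalCalculus) (deriv ρ) He * commOp He (indicOp m V)) x x).trace

section Aux

open Filter

lemma indicOp_apply' {m : ℕ} (W : Set R2) (ψ : Hsp m) (z : Z2) :
    (indicOp m W ψ) z = (emb ⁻¹' W).indicator (fun x : Z2 => ψ x) z := rfl

lemma indicOp_inner {m : ℕ} (W : Set R2) (φ ψ : Hsp m) :
    (inner ℂ (indicOp m W φ) ψ : ℂ) = inner ℂ φ (indicOp m W ψ) := by
  rw [lp.inner_eq_tsum, lp.inner_eq_tsum]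
  refine tsum_congr fun z => ?_
  by_cases h : z ∈ emb ⁻¹' W <;>
    simp [indicOp_apply', Set.indicator_of_mem, Set.indicator_of_notMem, h]

lemma sa_inner {m : ℕ} {P : Hsp m →L[ℂ] Hsp m} (hSA : IsSelfAdjoint P) (φ ψ : Hsp m) :
    (inner ℂ (P φ) ψ : ℂ) = inner ℂ φ (P ψ) := by
  conv_lhs => rw [← ContinuousLinearMap.isSelfAdjoint_iff'.mp hSA]
  exact ContinuousLinearMap.adjoint_inner_left P ψ φ

lemma indicOp_norm_le {m : ℕ} (W : Set R2) : ‖indicOp m W‖ ≤ 1 :=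
  LinearMap.mkContinuous_norm_le _ zero_le_one _

/-- Strong convergence: if `Wseq n` agrees with `W` on the `ℓ¹`-disk of radius `n`, then
the difference of the indicator multiplication operators tends strongly to zero. -/
lemma indic_strong {m : ℕ} (Wseq : ℕ → Set R2) (W : Set R2)
    (hW : ∀ n : ℕ,
      Wseq n ∩ {x : R2 | d1 x (0, 0) < (n : ℝ)} = W ∩ {x : R2 | d1 x (0, 0) < (n : ℝ)})
    (ξ : Hsp m) :
    Tendsto (fun n : ℕ => ‖(indicOp m (Wseq n) - indicOp m W) ξ‖) atTop (nhds 0) := by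
  set g : Z2 → ℝ := fun z => ‖ξ z‖ ^ (2 : ℝ) with hgdef
  have hg : Summable g := (lp.memℓp ξ).summable (by norm_num)
  have hg0 : ∀ z, 0 ≤ g z := fun z => Real.rpow_nonneg (norm_nonneg _) _
  set h : ℕ → Z2 → ℝ := fun n z => if (n : ℝ) ≤ d1 (emb z) (0, 0) then g z else 0 with hhdef
  set t : ℕ → ℝ := fun n => ∑' z, h n z with htdef
  have hhsummable : ∀ n, Summable (h n) := by
    intro n
    refine hg.of_nonneg_of_le (fun z => ?_) (fun z => ?_)
    · simp only [hhdef]; split_ifs; exacts [hg0 z, le_rfl]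
    · simp only [hhdef]; split_ifs; exacts [le_rfl, hg0 z]
  have ht : Tendsto t atTop (nhds 0) := by
    have := tendsto_tsum_of_dominated_convergence (𝓕 := atTop) (f := h)
      (g := fun _ : Z2 => (0 : ℝ)) (bound := g) hg ?_ ?_
    · simpa using this
    · intro z
      obtain ⟨N, hN⟩ := exists_nat_gt (d1 (emb z) (0, 0))
      refine tendsto_const_nhds.congr' ?_
      filter_upwards [eventually_ge_atTop N] with n hn
      have hcond : ¬ (n : ℝ) ≤ d1 (emb z) (0, 0) := by
        push_neg
        exact hN.trans_le (by exact_mod_cast hn)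
      simp only [hhdef]
      rw [if_neg hcond]
    · filter_upwards with n z
      simp only [hhdef]
      split_ifs
      · rw [Real.norm_eq_abs, abs_of_nonneg (hg0 z)]
      · simpa using hg0 z
  have key : ∀ n, ‖(indicOp m (Wseq n) - indicOp m W) ξ‖ ^ (2 : ℝ) ≤ t n := by
    intro n
    set η : Hsp m := (indicOp m (Wseq n) - indicOp m W) ξ with hη
    have hnorm : ‖η‖ ^ (2 : ℝ) = ∑' z, ‖η z‖ ^ (2 : ℝ) := by
      have := lp.norm_rpow_eq_tsum (p := 2) (by norm_num) η
      simpa using this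
    rw [hnorm]
    refine Summable.tsum_le_tsum (fun z => ?_) ((lp.memℓp η).summable (by norm_num)) (hhsummable n)
    have hηz : η z = (emb ⁻¹' Wseq n).indicator (fun x : Z2 => ξ x) z
        - (emb ⁻¹' W).indicator (fun x : Z2 => ξ x) z := by
      have : η = indicOp m (Wseq n) ξ - indicOp m W ξ := by
        rw [hη, ContinuousLinearMap.sub_apply]
      rw [this, lp.coeFn_sub]
      simp [indicOp_apply']
    by_cases hc : (n : ℝ) ≤ d1 (emb z) (0, 0)
    · have hle : ‖η z‖ ≤ ‖ξ z‖ := by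
        rw [hηz]
        by_cases h1 : z ∈ emb ⁻¹' Wseq n <;> by_cases h2 : z ∈ emb ⁻¹' W <;>
          simp [Set.indicator_of_mem, Set.indicator_of_notMem, h1, h2]
      have hpow : ‖η z‖ ^ (2 : ℝ) ≤ g z :=
        Real.rpow_le_rpow (norm_nonneg _) hle (by norm_num)
      simp only [hhdef]
      rw [if_pos hc]
      exact hpow
    · have hmem : z ∈ emb ⁻¹' Wseq n ↔ z ∈ emb ⁻¹' W := by
        have hz : emb z ∈ {x : R2 | d1 x (0, 0) < (n : ℝ)} := by
          simpa using lt_of_not_ge hc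
        have := Set.ext_iff.mp (hW n) (emb z)
        constructor
        · intro hzw
          exact ((this.mp ⟨hzw, hz⟩).1 : emb z ∈ W)
        · intro hzw
          exact ((this.mpr ⟨hzw, hz⟩).1 : emb z ∈ Wseq n)
      have hz0 : η z = 0 := by
        rw [hηz]
        by_cases h1 : z ∈ emb ⁻¹' Wseq n
        · rw [Set.indicator_of_mem h1, Set.indicator_of_mem (hmem.mp h1), sub_self]
        · rw [Set.indicator_of_notMem h1, Set.indicator_of_notMem (fun h2 => h1 (hmem.mpr h2)),
            sub_self]
      simp only [hhdef]
      rw [if_neg hc, hz0]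
      simp [Real.zero_rpow (by norm_num : (2:ℝ) ≠ 0)]
  have hle : ∀ n, ‖(indicOp m (Wseq n) - indicOp m W) ξ‖ ≤ Real.sqrt (t n) := by
    intro n
    refine Real.le_sqrt_of_sq_le ?_
    have := key n
    rwa [show ((2 : ℝ)) = ((2 : ℕ) : ℝ) by norm_num, Real.rpow_natCast] at this
  have hsq : Tendsto (fun n => Real.sqrt (t n)) atTop (nhds 0) := by
    simpa using ht.sqrt
  exact squeeze_zero (fun n => norm_nonneg _) hle hsq

lemma ringid {R : Type*} [Ring R] (p a b u v : R) :
    p * ((p * a - a * p) * (p * b - b * p) - (p * b - b * p) * (p * a - a * p))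
      - p * ((p * u - u * p) * (p * v - v * p) - (p * v - v * p) * (p * u - u * p))
    = p * (((p * (a - u) - (a - u) * p)) * (p * b - b * p))
      + p * ((p * u - u * p) * (p * (b - v) - (b - v) * p))
      - p * ((p * (b - v) - (b - v) * p) * (p * a - a * p))
      - p * ((p * v - v * p) * (p * (a - u) - (a - u) * p)) := by
  noncomm_ring

/-- moving a difference-of-indicators commutator onto the left vector. -/
lemma inner_comm_bound {m : ℕ} {P : Hsp m →L[ℂ] Hsp m} (hSA : IsSelfAdjoint P)
    (W W' : Set R2) (φ ψ : Hsp m) :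
    ‖(inner ℂ φ ((P * (indicOp m W - indicOp m W')
        - (indicOp m W - indicOp m W') * P) ψ) : ℂ)‖
      ≤ ‖(indicOp m W - indicOp m W') (P φ)‖ * ‖ψ‖
        + ‖(indicOp m W - indicOp m W') φ‖ * (‖P‖ * ‖ψ‖) := by
  set D : Hsp m →L[ℂ] Hsp m := indicOp m W - indicOp m W' with hD
  have hDsa : ∀ a b : Hsp m, (inner ℂ (D a) b : ℂ) = inner ℂ a (D b) := by
    intro a b
    rw [hD]
    simp only [ContinuousLinearMap.sub_apply, inner_sub_left, inner_sub_right,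
      indicOp_inner]
  have hsplit : (inner ℂ φ ((P * D - D * P) ψ) : ℂ)
      = inner ℂ (D (P φ)) ψ - inner ℂ (D φ) (P ψ) := by
    simp only [ContinuousLinearMap.sub_apply, ContinuousLinearMap.mul_apply,
      inner_sub_right]
    rw [← sa_inner hSA φ (D ψ), ← hDsa (P φ) ψ, ← hDsa φ (P ψ)]
  rw [hsplit]
  refine (norm_sub_le _ _).trans ?_
  have c1 : ‖(inner ℂ (D (P φ)) ψ : ℂ)‖ ≤ ‖D (P φ)‖ * ‖ψ‖ := norm_inner_le_norm _ _
  have c2 : ‖(inner ℂ (D φ) (P ψ) : ℂ)‖ ≤ ‖D φ‖ * (‖P‖ * ‖ψ‖) := by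
    refine (norm_inner_le_norm _ _).trans ?_
    exact mul_le_mul_of_nonneg_left (P.le_opNorm ψ) (norm_nonneg _)
  linarith

lemma comm_indic_apply_norm_le {m : ℕ} (P : Hsp m →L[ℂ] Hsp m) (W : Set R2) (ξ : Hsp m) :
    ‖(commOp P (indicOp m W)) ξ‖ ≤ 2 * ‖P‖ * ‖ξ‖ := by
  have h1 : ‖P ((indicOp m W) ξ)‖ ≤ ‖P‖ * ‖ξ‖ := by
    refine (P.le_opNorm _).trans ?_
    gcongr
    exact ((indicOp m W).le_opNorm ξ).trans (by
      have := indicOp_norm_le (m := m) W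
      nlinarith [norm_nonneg ξ])
  have h2 : ‖(indicOp m W) (P ξ)‖ ≤ ‖P‖ * ‖ξ‖ := by
    refine ((indicOp m W).le_opNorm _).trans ?_
    have h3 := P.le_opNorm ξ
    have h4 := indicOp_norm_le (m := m) W
    nlinarith [norm_nonneg (P ξ), norm_nonneg ξ, norm_nonneg P]
  calc ‖(commOp P (indicOp m W)) ξ‖
      = ‖P ((indicOp m W) ξ) - (indicOp m W) (P ξ)‖ := by
        simp [commOp, ContinuousLinearMap.sub_apply, ContinuousLinearMap.mul_apply]
    _ ≤ ‖P ((indicOp m W) ξ)‖ + ‖(indicOp m W) (P ξ)‖ := norm_sub_le _ _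
    _ ≤ 2 * ‖P‖ * ‖ξ‖ := by linarith

end Aux

set_option maxHeartbeats 2000000 in
/-- Lemma 6.4: if (U_n, V_n) are transverse pairs agreeing with
(ℍ₂, ℍ₁) on the ℓ¹-disk of radius n, then the diagonal kernels of K_{U_n,V_n}(P)
converge pointwise to those of K_{ℍ₂,ℍ₁}(P). -/
theorem bulk_kernel_local_convergence
    (m : ℕ) (hm : 0 < m)
    (P : Hsp m →L[ℂ] Hsp m)
    (hSA : IsSelfAdjoint P) (hProj : P * P = P) (hPSR : IsPSR P)
    (Useq Vseq : ℕ → Set R2)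
    (htrans : ∀ n : ℕ, Transverse (Useq n) (Vseq n))
    (hU : ∀ n : ℕ, Useq n ∩ {x : R2 | d1 x (0, 0) < (n : ℝ)} = H2 ∩ {x : R2 | d1 x (0, 0) < (n : ℝ)})
    (hV : ∀ n : ℕ, Vseq n ∩ {x : R2 | d1 x (0, 0) < (n : ℝ)} = H1 ∩ {x : R2 | d1 x (0, 0) < (n : ℝ)})
    (x : Z2) :
    Filter.Tendsto (fun n : ℕ => opKer (Kop P (Useq n) (Vseq n)) x x)
      Filter.atTop (nhds (opKer (Kop P H2 H1) x x)) := by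
  clear htrans hPSR hProj hm
  refine tendsto_pi_nhds.mpr fun i => tendsto_pi_nhds.mpr fun j => ?_
  simp only [opKer, Matrix.of_apply]
  set e : Fin m → Hsp m :=
    fun i => lp.single 2 x (EuclideanSpace.single i (1 : ℂ)) with he
  rw [← tendsto_sub_nhds_zero_iff]
  -- difference of kernels as inner ℂ product with the difference operator
  have hdiff : ∀ n : ℕ,
      (inner ℂ (e i) (Kop P (Useq n) (Vseq n) (e j)) : ℂ)
        - inner ℂ (e i) (Kop P H2 H1 (e j))
      = inner ℂ (e i) ((Kop P (Useq n) (Vseq n) - Kop P H2 H1) (e j)) := by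
    intro n
    simp [ContinuousLinearMap.sub_apply, inner_sub_right]
  -- notation
  set a : ℕ → (Hsp m →L[ℂ] Hsp m) := fun n => indicOp m (Useq n) with ha
  set b : ℕ → (Hsp m →L[ℂ] Hsp m) := fun n => indicOp m (Vseq n) with hb
  set u : Hsp m →L[ℂ] Hsp m := indicOp m H2 with hu
  set v : Hsp m →L[ℂ] Hsp m := indicOp m H1 with hv
  set Du : ℕ → (Hsp m →L[ℂ] Hsp m) := fun n => a n - u with hDu
  set Dv : ℕ → (Hsp m →L[ℂ] Hsp m) := fun n => b n - v with hDv
  set Cu : ℕ → (Hsp m →L[ℂ] Hsp m) := fun n => P * Du n - Du n * P with hCu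
  set Cv : ℕ → (Hsp m →L[ℂ] Hsp m) := fun n => P * Dv n - Dv n * P with hCv
  -- operator identity
  have hop : ∀ n : ℕ, Kop P (Useq n) (Vseq n) - Kop P H2 H1
      = P * (Cu n * commOp P (b n)) + P * (commOp P u * Cv n)
        - P * (Cv n * commOp P (a n)) - P * (commOp P v * Cu n) := by
    intro n
    simp only [Kop, commOp, hCu, hCv, hDu, hDv, ha, hb, hu, hv]
    exact ringid P (indicOp m (Useq n)) (indicOp m (Vseq n)) (indicOp m H2) (indicOp m H1)
  -- strong convergence of Du, Dv on fixed vectors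
  have hDuS : ∀ ξ : Hsp m, Filter.Tendsto (fun n => ‖Du n ξ‖) Filter.atTop (nhds 0) :=
    fun ξ => indic_strong Useq H2 hU ξ
  have hDvS : ∀ ξ : Hsp m, Filter.Tendsto (fun n => ‖Dv n ξ‖) Filter.atTop (nhds 0) :=
    fun ξ => indic_strong Vseq H1 hV ξ
  -- each of the four terms tends to 0
  -- Term 1 : inner ℂ (e i) ((P * (Cu n * commOp P (b n))) (e j))
  have hterm1 : Filter.Tendsto
      (fun n => (inner ℂ (e i) ((P * (Cu n * commOp P (b n))) (e j)) : ℂ))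
      Filter.atTop (nhds 0) := by
    refine squeeze_zero_norm (a := fun n =>
      ‖Du n (P (P (e i)))‖ * (2 * ‖P‖ * ‖e j‖)
        + ‖Du n (P (e i))‖ * (‖P‖ * (2 * ‖P‖ * ‖e j‖))) (fun n => ?_) ?_
    · have h1 : (inner ℂ (e i) ((P * (Cu n * commOp P (b n))) (e j)) : ℂ)
          = inner ℂ (P (e i)) (Cu n (commOp P (b n) (e j))) := by
        simp only [ContinuousLinearMap.mul_apply]
        rw [sa_inner hSA]
      rw [h1]
      have h2 := inner_comm_bound (W := Useq n) (W' := H2) hSA (P (e i))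
        (commOp P (b n) (e j))
      have h3 : ‖commOp P (b n) (e j)‖ ≤ 2 * ‖P‖ * ‖e j‖ :=
        comm_indic_apply_norm_le P (Vseq n) (e j)
      refine h2.trans ?_
      exact add_le_add (mul_le_mul_of_nonneg_left h3 (norm_nonneg _))
        (mul_le_mul_of_nonneg_left (mul_le_mul_of_nonneg_left h3 (norm_nonneg _))
          (norm_nonneg _))
    · have l1 := (hDuS (P (P (e i)))).mul_const (2 * ‖P‖ * ‖e j‖)
      have l2 := (hDuS (P (e i))).mul_const (‖P‖ * (2 * ‖P‖ * ‖e j‖))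
      simpa only [zero_mul, add_zero] using l1.add l2
  -- Term 2 : inner ℂ (e i) ((P * (commOp P u * Cv n)) (e j))
  have hterm2 : Filter.Tendsto
      (fun n => (inner ℂ (e i) ((P * (commOp P u * Cv n)) (e j)) : ℂ))
      Filter.atTop (nhds 0) := by
    refine squeeze_zero_norm (a := fun n =>
      ‖e i‖ * (‖P‖ * (2 * ‖P‖ * (‖P‖ * ‖Dv n (e j)‖ + ‖Dv n (P (e j))‖))))
      (fun n => ?_) ?_
    · have hc : ‖Cv n (e j)‖ ≤ ‖P‖ * ‖Dv n (e j)‖ + ‖Dv n (P (e j))‖ := by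
        have : Cv n (e j) = P (Dv n (e j)) - Dv n (P (e j)) := by
          simp [hCv, ContinuousLinearMap.sub_apply, ContinuousLinearMap.mul_apply]
        rw [this]
        refine (norm_sub_le _ _).trans ?_
        gcongr
        exact P.le_opNorm _
      calc ‖(inner ℂ (e i) ((P * (commOp P u * Cv n)) (e j)) : ℂ)‖
          ≤ ‖e i‖ * ‖(P * (commOp P u * Cv n)) (e j)‖ := norm_inner_le_norm _ _
        _ ≤ ‖e i‖ * (‖P‖ * (2 * ‖P‖ * (‖P‖ * ‖Dv n (e j)‖ + ‖Dv n (P (e j))‖))) := by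
            gcongr
            simp only [ContinuousLinearMap.mul_apply]
            refine (P.le_opNorm _).trans ?_
            gcongr
            refine (comm_indic_apply_norm_le P H2 _).trans ?_
            gcongr
    · have l1 := ((hDvS (e j)).const_mul ‖P‖).add (hDvS (P (e j)))
      have := ((l1.const_mul (2 * ‖P‖)).const_mul ‖P‖).const_mul ‖e i‖
      simpa only [mul_zero, add_zero] using this
  -- Term 3 : inner ℂ (e i) ((P * (Cv n * commOp P (a n))) (e j))
  have hterm3 : Filter.Tendsto
      (fun n => (inner ℂ (e i) ((P * (Cv n * commOp P (a n))) (e j)) : ℂ))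
      Filter.atTop (nhds 0) := by
    refine squeeze_zero_norm (a := fun n =>
      ‖Dv n (P (P (e i)))‖ * (2 * ‖P‖ * ‖e j‖)
        + ‖Dv n (P (e i))‖ * (‖P‖ * (2 * ‖P‖ * ‖e j‖))) (fun n => ?_) ?_
    · have h1 : (inner ℂ (e i) ((P * (Cv n * commOp P (a n))) (e j)) : ℂ)
          = inner ℂ (P (e i)) (Cv n (commOp P (a n) (e j))) := by
        simp only [ContinuousLinearMap.mul_apply]
        rw [sa_inner hSA]
      rw [h1]
      have h2 := inner_comm_bound (W := Vseq n) (W' := H1) hSA (P (e i))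
        (commOp P (a n) (e j))
      have h3 : ‖commOp P (a n) (e j)‖ ≤ 2 * ‖P‖ * ‖e j‖ :=
        comm_indic_apply_norm_le P (Useq n) (e j)
      refine h2.trans ?_
      exact add_le_add (mul_le_mul_of_nonneg_left h3 (norm_nonneg _))
        (mul_le_mul_of_nonneg_left (mul_le_mul_of_nonneg_left h3 (norm_nonneg _))
          (norm_nonneg _))
    · have l1 := (hDvS (P (P (e i)))).mul_const (2 * ‖P‖ * ‖e j‖)
      have l2 := (hDvS (P (e i))).mul_const (‖P‖ * (2 * ‖P‖ * ‖e j‖))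
      simpa only [zero_mul, add_zero] using l1.add l2
  -- Term 4 : inner ℂ (e i) ((P * (commOp P v * Cu n)) (e j))
  have hterm4 : Filter.Tendsto
      (fun n => (inner ℂ (e i) ((P * (commOp P v * Cu n)) (e j)) : ℂ))
      Filter.atTop (nhds 0) := by
    refine squeeze_zero_norm (a := fun n =>
      ‖e i‖ * (‖P‖ * (2 * ‖P‖ * (‖P‖ * ‖Du n (e j)‖ + ‖Du n (P (e j))‖))))
      (fun n => ?_) ?_
    · have hc : ‖Cu n (e j)‖ ≤ ‖P‖ * ‖Du n (e j)‖ + ‖Du n (P (e j))‖ := by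
        have : Cu n (e j) = P (Du n (e j)) - Du n (P (e j)) := by
          simp [hCu, ContinuousLinearMap.sub_apply, ContinuousLinearMap.mul_apply]
        rw [this]
        refine (norm_sub_le _ _).trans ?_
        gcongr
        exact P.le_opNorm _
      calc ‖(inner ℂ (e i) ((P * (commOp P v * Cu n)) (e j)) : ℂ)‖
          ≤ ‖e i‖ * ‖(P * (commOp P v * Cu n)) (e j)‖ := norm_inner_le_norm _ _
        _ ≤ ‖e i‖ * (‖P‖ * (2 * ‖P‖ * (‖P‖ * ‖Du n (e j)‖ + ‖Du n (P (e j))‖))) := by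
            gcongr
            simp only [ContinuousLinearMap.mul_apply]
            refine (P.le_opNorm _).trans ?_
            gcongr
            refine (comm_indic_apply_norm_le P H1 _).trans ?_
            gcongr
    · have l1 := ((hDuS (e j)).const_mul ‖P‖).add (hDuS (P (e j)))
      have := ((l1.const_mul (2 * ‖P‖)).const_mul ‖P‖).const_mul ‖e i‖
      simpa only [mul_zero, add_zero] using this
  -- combine
  have hcomb := ((hterm1.add hterm2).sub hterm3).sub hterm4
  refine (Filter.Tendsto.congr ?_ (by simpa using hcomb))
  intro n
  rw [hdiff n, hop n]
  simp [ContinuousLinearMap.sub_apply, ContinuousLinearMap.add_apply,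
    inner_sub_right, inner_add_right]

end
end
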